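/- arXiv:1701.00131 — 4 statements merged into one kernel-verified Lean document; each statement's English description precedes it below -/
import Mathlib

section
/- Let C be a compact subset of ℝ² and let D be a closed disc whose center lies in C. Then diam(C ∪ D) ≤ max( diam(C) + √(2·(area(C∪D) − area(C))/π), √(4·area(C∪D)/π) ), where area denotes 2-dimensional Lebesgue measure and diam the Euclidean diameter. -/
open MeasureTheory Metric Real



local notation "E" => EuclideanSpace ℝ (Fin 2)

lemma vol_ball2 (c : E) (t : ℝ) (ht : 0 ≤ t) :
    volume (ball c t) = ENNReal.ofReal (π * t ^ 2) := by
  rw [EuclideanSpace.volume_ball]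
  simp only [Fintype.card_fin]
  rw [show ((2:ℕ) / 2 + 1 : ℝ) = 2 by norm_num, Real.Gamma_two, div_one,
    Real.sq_sqrt pi_pos.le, ← ENNReal.ofReal_pow ht, ← ENNReal.ofReal_mul (by positivity)]
  ring_nf

lemma vol_halfball (c u : E) (hu : ‖u‖ = 1) (t : ℝ) (ht : 0 < t) :
    volume {z : E | dist z c < t ∧ 0 < (inner ℝ (z - c) u : ℝ)} = ENNReal.ofReal (π * t ^ 2) / 2 := by
  set Sp := {z : E | dist z c < t ∧ 0 < (inner ℝ (z - c) u : ℝ)} with hSp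
  set Sm := {z : E | dist z c < t ∧ (inner ℝ (z - c) u : ℝ) < 0} with hSm
  have hcont : Continuous fun z : E => (inner ℝ (z - c) u : ℝ) :=
    (continuous_id.sub continuous_const).inner continuous_const
  have hopp : IsOpen Sp := by
    have : Sp = ball c t ∩ {z : E | 0 < (inner ℝ (z - c) u : ℝ)} := rfl
    rw [this]; exact isOpen_ball.inter (isOpen_lt continuous_const hcont)
  have hopm : IsOpen Sm := by
    have : Sm = ball c t ∩ {z : E | (inner ℝ (z - c) u : ℝ) < 0} := rfl
    rw [this]; exact isOpen_ball.inter (isOpen_lt hcont continuous_const)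
  -- reflection z ↦ (c + c) - z identifies Sm and Sp
  have hrefl : volume Sm = volume Sp := by
    have hpre : (fun z : E => c + c - z) ⁻¹' Sp = Sm := by
      ext z
      have h1 : dist (c + c - z) c = dist z c := by
        rw [dist_eq_norm, dist_eq_norm, show c + c - z - c = -(z - c) by abel, norm_neg]
      have h2 : (inner ℝ (c + c - z - c) u : ℝ) = -(inner ℝ (z - c) u : ℝ) := by
        rw [show c + c - z - c = -(z - c) by abel, inner_neg_left]
      simp only [Set.mem_preimage, hSp, hSm, Set.mem_setOf_eq, h1, h2, neg_pos]
    rw [← hpre]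
    exact (Measure.measurePreserving_sub_left volume (c + c)).measure_preimage
      hopp.measurableSet.nullMeasurableSet
  -- the separating hyperplane has measure zero
  have hzero : volume {z : E | (inner ℝ (z - c) u : ℝ) = 0} = 0 := by
    have : {z : E | (inner ℝ (z - c) u : ℝ) = 0} ⊆
        (AffineSubspace.mk' c (LinearMap.ker (innerSL ℝ u : E →ₗ[ℝ] ℝ)) : Set E) := by
      intro z hz
      rw [AffineSubspace.mem_coe, AffineSubspace.mem_mk', LinearMap.mem_ker]
      show (inner ℝ u (z - c) : ℝ) = 0
      rw [real_inner_comm]; exact hz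
    refine measure_mono_null this (Measure.addHaar_affineSubspace _ _ ?_)
    intro h
    have hd : (AffineSubspace.mk' c (LinearMap.ker (innerSL ℝ u : E →ₗ[ℝ] ℝ))).direction = ⊤ := by
      rw [h]; exact AffineSubspace.direction_top ℝ E E
    rw [AffineSubspace.direction_mk'] at hd
    have hu2 : u ∈ LinearMap.ker (innerSL ℝ u : E →ₗ[ℝ] ℝ) := hd ▸ Submodule.mem_top
    have : (inner ℝ u u : ℝ) = 0 := by simpa using hu2
    rw [real_inner_self_eq_norm_sq, hu] at this
    norm_num at this
  have hcover : ball c t = Sp ∪ Sm ∪ (ball c t ∩ {z : E | (inner ℝ (z - c) u : ℝ) = 0}) := by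
    ext z
    simp only [Set.mem_union, Set.mem_inter_iff, hSp, hSm, Set.mem_setOf_eq, mem_ball]
    constructor
    · intro hz
      rcases lt_trichotomy (0 : ℝ) (inner ℝ (z - c) u : ℝ) with h | h | h
      · exact Or.inl (Or.inl ⟨hz, h⟩)
      · exact Or.inr ⟨hz, h.symm⟩
      · exact Or.inl (Or.inr ⟨hz, h⟩)
    · rintro ((⟨h, _⟩ | ⟨h, _⟩) | ⟨h, _⟩) <;> exact h
  have hdisj : Disjoint Sp Sm := by
    rw [Set.disjoint_left]
    rintro z ⟨_, h1⟩ ⟨_, h2⟩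
    exact absurd (h1.trans h2) (lt_irrefl _)
  have hX0 : volume (ball c t ∩ {z : E | (inner ℝ (z - c) u : ℝ) = 0}) = 0 :=
    measure_mono_null Set.inter_subset_right hzero
  have hball : volume (ball c t) = 2 * volume Sp := by
    have h1 : volume (ball c t) = volume (Sp ∪ Sm) := by
      refine le_antisymm ?_ (measure_mono (by rw [hcover]; exact Set.subset_union_left))
      rw [hcover]
      exact (measure_union_le _ _).trans (by rw [hX0, add_zero])
    rw [h1, measure_union hdisj hopm.measurableSet, hrefl, two_mul]
  have := vol_ball2 c t ht.le
  rw [hball] at this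
  rw [ENNReal.eq_div_iff two_ne_zero ENNReal.ofNat_ne_top, this]

lemma key_mixed (C : Set E) (hC : IsCompact C) (v : E) (r : ℝ) (hr : 0 ≤ r) (hv : v ∈ C)
    (a b : E) (ha : a ∈ C) (hb : b ∈ closedBall v r) :
    dist a b ≤ diam C +
      Real.sqrt (2 * ((volume (C ∪ closedBall v r)).toReal - (volume C).toReal) / π) := by
  set t := dist a b - diam C with htdef
  rcases le_or_gt t 0 with ht | ht
  · have : dist a b ≤ diam C := by linarith [htdef]
    exact this.trans (le_add_of_nonneg_right (Real.sqrt_nonneg _))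
  -- main case
  have hL : dist a b = diam C + t := by ring
  have hLpos : 0 < dist a b := lt_of_lt_of_le ht (by linarith [diam_nonneg (s := C)])
  have htr : t ≤ r := by
    have h1 : dist a b ≤ dist a v + dist v b := dist_triangle a v b
    have h2 : dist a v ≤ diam C := dist_le_diam_of_mem hC.isBounded ha hv
    have h3 : dist v b ≤ r := by rwa [dist_comm, ← mem_closedBall]
    simp only [htdef]; linarith
  set u : E := ‖b - a‖⁻¹ • (b - a) with hudef
  have hba : ‖b - a‖ = dist a b := by rw [dist_comm, dist_eq_norm]
  have hba0 : ‖b - a‖ ≠ 0 := by rw [hba]; exact hLpos.ne'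
  have hu : ‖u‖ = 1 := by
    rw [hudef, norm_smul, norm_inv, norm_norm, inv_mul_cancel₀ hba0]
  set c : E := v + (r - t) • u with hcdef
  set Sp := {z : E | dist z c < t ∧ 0 < (inner ℝ (z - c) u : ℝ)} with hSp
  -- Sp ⊆ closedBall v r
  have hsub : Sp ⊆ closedBall v r := by
    rintro z ⟨h1, h2⟩
    rw [mem_closedBall]
    have hcv : dist c v = r - t := by
      rw [hcdef, dist_eq_norm, add_sub_cancel_left, norm_smul, hu, mul_one,
        Real.norm_eq_abs, abs_of_nonneg (by linarith)]
    calc dist z v ≤ dist z c + dist c v := dist_triangle z c v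
      _ ≤ t + (r - t) := by linarith [h1.le]
      _ = r := by ring
  -- Sp ∩ C = ∅
  have hdisj : Disjoint C Sp := by
    rw [Set.disjoint_left]
    rintro z hzC ⟨h1, h2⟩
    have hinner_ba : (inner ℝ (b - a) u : ℝ) = dist a b := by
      rw [hudef, real_inner_smul_right, real_inner_self_eq_norm_sq, hba]
      field_simp
    have hinner_bv : (inner ℝ (b - v) u : ℝ) ≤ r := by
      calc (inner ℝ (b - v) u : ℝ) ≤ ‖b - v‖ * ‖u‖ := real_inner_le_norm _ _
        _ = ‖b - v‖ := by rw [hu, mul_one]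
        _ ≤ r := by rw [← dist_eq_norm]; rwa [mem_closedBall] at hb
    have hinner_cv : (inner ℝ (c - v) u : ℝ) = r - t := by
      rw [hcdef, add_sub_cancel_left, real_inner_smul_left, real_inner_self_eq_norm_sq, hu]
      ring
    have hdecomp : (inner ℝ (z - a) u : ℝ) =
        (inner ℝ (z - c) u : ℝ) + (inner ℝ (c - v) u : ℝ) + (inner ℝ (b - a) u : ℝ)
          - (inner ℝ (b - v) u : ℝ) := by
      rw [show z - a = (z - c) + (c - v) + (b - a) - (b - v) by abel, inner_sub_left,
        inner_add_left, inner_add_left]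
    have hgt : diam C < (inner ℝ (z - a) u : ℝ) := by
      rw [hdecomp, hinner_cv, hinner_ba]
      have : dist a b = diam C + t := hL
      linarith
    have hle : (inner ℝ (z - a) u : ℝ) ≤ ‖z - a‖ := by
      calc (inner ℝ (z - a) u : ℝ) ≤ ‖z - a‖ * ‖u‖ := real_inner_le_norm _ _
        _ = ‖z - a‖ := by rw [hu, mul_one]
    have : ‖z - a‖ ≤ diam C := by
      rw [← dist_eq_norm, dist_comm]
      exact dist_le_diam_of_mem hC.isBounded ha hzC
    linarith
  -- volume estimate
  have hSpvol : volume Sp = ENNReal.ofReal (π * t ^ 2) / 2 := vol_halfball c u hu t ht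
  have hfin : volume (C ∪ closedBall v r) ≠ ⊤ :=
    ((hC.isBounded.union isBounded_closedBall).measure_lt_top).ne
  have hCfin : volume C ≠ ⊤ := hC.isBounded.measure_lt_top.ne
  have hunion : volume C + volume Sp ≤ volume (C ∪ closedBall v r) := by
    rw [← measure_union hdisj (by
      have : Sp = ball c t ∩ {z : E | 0 < (inner ℝ (z - c) u : ℝ)} := rfl
      rw [this]
      exact (isOpen_ball.inter (isOpen_lt continuous_const
        ((continuous_id.sub continuous_const).inner continuous_const))).measurableSet)]
    exact measure_mono (Set.union_subset Set.subset_union_left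
      (hsub.trans Set.subset_union_right))
  have hΔ : π * t ^ 2 / 2 ≤ (volume (C ∪ closedBall v r)).toReal - (volume C).toReal := by
    have h1 : (volume C + volume Sp).toReal ≤ (volume (C ∪ closedBall v r)).toReal :=
      ENNReal.toReal_mono hfin hunion
    have hSpfin : volume Sp ≠ ⊤ := by rw [hSpvol]; simp [ENNReal.div_eq_top]
    rw [ENNReal.toReal_add hCfin hSpfin, hSpvol, ENNReal.toReal_div,
      ENNReal.toReal_ofReal (by positivity)] at h1
    norm_num at h1 ⊢
    linarith
  have htle : t ≤ Real.sqrt (2 * ((volume (C ∪ closedBall v r)).toReal - (volume C).toReal) / π) := by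
    have h2 : t ^ 2 ≤ 2 * ((volume (C ∪ closedBall v r)).toReal - (volume C).toReal) / π := by
      rw [le_div_iff₀ pi_pos]
      ring_nf
      ring_nf at hΔ
      linarith
    calc t = Real.sqrt (t ^ 2) := by rw [Real.sqrt_sq ht.le]
      _ ≤ _ := Real.sqrt_le_sqrt h2
  linarith [hL]

theorem stmt_0 (C : Set (EuclideanSpace ℝ (Fin 2))) (hC : IsCompact C)
    (v : EuclideanSpace ℝ (Fin 2)) (r : ℝ) (hr : 0 ≤ r) (hv : v ∈ C) :
    Metric.diam (C ∪ Metric.closedBall v r) ≤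
      max (Metric.diam C +
          Real.sqrt (2 * ((volume (C ∪ Metric.closedBall v r)).toReal - (volume C).toReal)
            / Real.pi))
        (Real.sqrt (4 * (volume (C ∪ Metric.closedBall v r)).toReal / Real.pi)) := by
  have hfin : volume (C ∪ closedBall v r) ≠ ⊤ :=
    ((hC.isBounded.union isBounded_closedBall).measure_lt_top).ne
  refine diam_le_of_forall_dist_le (le_max_of_le_left (by positivity)) ?_
  intro x hx y hy
  have hmixed : ∀ a b : E, a ∈ C → b ∈ closedBall v r → dist a b ≤ _ :=
    fun a b ha hb => key_mixed C hC v r hr hv a b ha hb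
  rcases hx with hx | hx <;> rcases hy with hy | hy
  · -- both in C
    refine le_max_of_le_left ?_
    exact (dist_le_diam_of_mem hC.isBounded hx hy).trans
      (le_add_of_nonneg_right (Real.sqrt_nonneg _))
  · exact le_max_of_le_left (hmixed x y hx hy)
  · rw [dist_comm]; exact le_max_of_le_left (hmixed y x hy hx)
  · -- both in the ball
    refine le_max_of_le_right ?_
    have h2r : dist x y ≤ 2 * r := by
      have := dist_triangle x v y
      rw [mem_closedBall] at hx hy
      rw [dist_comm v y] at this
      linarith [hx, hy, this]
    have hvol : π * r ^ 2 ≤ (volume (C ∪ closedBall v r)).toReal := by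
      have h1 : volume (closedBall v r) ≤ volume (C ∪ closedBall v r) :=
        measure_mono Set.subset_union_right
      have h2 : volume (closedBall v r) = ENNReal.ofReal (π * r ^ 2) := by
        rw [EuclideanSpace.volume_closedBall]
        simp only [Fintype.card_fin]
        rw [show ((2:ℕ) / 2 + 1 : ℝ) = 2 by norm_num, Real.Gamma_two, div_one,
          Real.sq_sqrt pi_pos.le, ← ENNReal.ofReal_pow hr, ← ENNReal.ofReal_mul (by positivity)]
        ring_nf
      have := ENNReal.toReal_mono hfin h1
      rwa [h2, ENNReal.toReal_ofReal (by positivity)] at this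
    refine h2r.trans ?_
    have h3 : (2 * r) ^ 2 ≤ 4 * (volume (C ∪ closedBall v r)).toReal / π := by
      rw [le_div_iff₀ pi_pos]
      nlinarith [hvol, pi_pos]
    calc 2 * r = Real.sqrt ((2 * r) ^ 2) := by rw [Real.sqrt_sq (by positivity)]
      _ ≤ _ := Real.sqrt_le_sqrt h3
end

section
/- Let C be a compact convex subset of ℝ² and D a closed disc whose center lies in C. Then sup_{z ∈ C, z' ∈ D} ‖z − z'‖ − diam(C) ≤ √(2·(area(C∪D) − area(C))/π). -/
open MeasureTheory Metric RealInnerProductSpace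

set_option maxHeartbeats 2000000

/-- For `C` compact convex and `D = closedBall v r` with center in `C`:
every distance between a point of `C` and a point of `D`, minus `diam C`,
is at most `√(2·(area(C∪D) − area(C))/π)`. -/
theorem stmt_1 (C : Set (EuclideanSpace ℝ (Fin 2))) (hC : IsCompact C) (hconv : Convex ℝ C)
    (v : EuclideanSpace ℝ (Fin 2)) (r : ℝ) (hr : 0 ≤ r) (hv : v ∈ C)
    (z z' : EuclideanSpace ℝ (Fin 2)) (hz : z ∈ C) (hz' : z' ∈ Metric.closedBall v r) :
    dist z z' - Metric.diam C ≤
      Real.sqrt (2 * ((volume (C ∪ Metric.closedBall v r)).toReal - (volume C).toReal)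
        / Real.pi) := by
  classical
  have hπ : (0:ℝ) < Real.pi := Real.pi_pos
  set D := Metric.closedBall v r with hD
  rcases le_or_gt (dist z z' - Metric.diam C) 0 with hneg | hpos
  · exact hneg.trans (Real.sqrt_nonneg _)
  set R := Metric.diam C with hRdef
  have hR : 0 ≤ R := diam_nonneg
  set d := dist z v with hddef
  have hd0 : 0 ≤ d := dist_nonneg
  have hdR : d ≤ R := dist_le_diam_of_mem hC.isBounded hz hv
  set s := d + r - R with hsdef
  have hzz' : dist z z' ≤ d + r := by
    have h1 := dist_triangle z v z'
    have h2 : dist v z' ≤ r := by rw [dist_comm]; exact mem_closedBall.mp hz'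
    linarith
  have hts : dist z z' - R ≤ s := by simp only [hsdef]; linarith
  have hs : 0 < s := lt_of_lt_of_le hpos hts
  have hsr : s ≤ r := by simp only [hsdef]; linarith
  -- unit vector from z to v
  obtain ⟨e, he1, hve⟩ : ∃ e : EuclideanSpace ℝ (Fin 2), ‖e‖ = 1 ∧ v - z = d • e := by
    by_cases hvz : v = z
    · refine ⟨EuclideanSpace.single 0 1, by simp, ?_⟩
      have : d = 0 := by simp [hddef, hvz, dist_comm]
      simp [hvz, this]
    · refine ⟨‖v - z‖⁻¹ • (v - z), norm_smul_inv_norm (sub_ne_zero.mpr hvz), ?_⟩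
      have hdn : d = ‖v - z‖ := by rw [hddef, dist_comm, dist_eq_norm]
      rw [hdn, smul_smul, mul_inv_cancel₀ (norm_ne_zero_iff.mpr (sub_ne_zero.mpr hvz)), one_smul]
  set c : EuclideanSpace ℝ (Fin 2) := z + R • e with hcdef
  set Hp : Set (EuclideanSpace ℝ (Fin 2)) := ball c s ∩ {w | 0 < ⟪e, w - c⟫} with hHp
  set Hm : Set (EuclideanSpace ℝ (Fin 2)) := ball c s ∩ {w | ⟪e, w - c⟫ < 0} with hHm
  set S0 : Set (EuclideanSpace ℝ (Fin 2)) := {w | ⟪e, w - c⟫ = 0} with hS0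
  have hinner_le : ∀ w : EuclideanSpace ℝ (Fin 2), ⟪e, w - c⟫ ≤ ‖w - c‖ := fun w => by
    calc ⟪e, w - c⟫ ≤ ‖e‖ * ‖w - c‖ := real_inner_le_norm _ _
    _ = ‖w - c‖ := by rw [he1, one_mul]
  -- Hp ⊆ D
  have hHpD : Hp ⊆ D := by
    rintro w ⟨hw1, hw2⟩
    have hρ : ‖w - c‖ < s := by rwa [mem_ball, dist_eq_norm] at hw1
    have ha : ⟪e, w - c⟫ ≤ ‖w - c‖ := hinner_le w
    have hwv : w - v = (w - c) + (R - d) • e := by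
      have : v = z + d • e := by rw [← hve]; abel
      rw [this, hcdef]; module
    have hsq : ‖w - v‖^2 = ‖w - c‖^2 + 2 * ((R - d) * ⟪e, w - c⟫) + (R - d)^2 := by
      rw [hwv, norm_add_sq_real, real_inner_smul_right, norm_smul, real_inner_comm,
        Real.norm_eq_abs, abs_of_nonneg (by linarith : (0:ℝ) ≤ R - d),  he1, mul_one]
    have hRd : R - d = r - s := by rw [hsdef]; ring
    rw [hRd] at hsq
    have h2 : ‖w - v‖^2 ≤ r^2 := by nlinarith [norm_nonneg (w - c), (by exact hw2 : (0:ℝ) < ⟪e, w - c⟫).le]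
    have : dist w v ≤ r := by
      rw [dist_eq_norm]
      nlinarith [norm_nonneg (w - v)]
    exact mem_closedBall.mpr this
  -- Hp disjoint from C
  have hHpC : Disjoint C Hp := by
    rw [Set.disjoint_right]
    rintro w ⟨hw1, hw2⟩ hwC
    have hzw : dist z w ≤ R := dist_le_diam_of_mem hC.isBounded hz hwC
    have ha : (0:ℝ) < ⟪e, w - c⟫ := hw2
    have hρ : 0 < ‖w - c‖ := lt_of_lt_of_le ha (hinner_le w)
    have hwz : w - z = (w - c) + R • e := by rw [hcdef]; module
    have hsq : ‖w - z‖^2 = ‖w - c‖^2 + 2 * (R * ⟪e, w - c⟫) + R^2 := by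
      rw [hwz, norm_add_sq_real, real_inner_smul_right, norm_smul, real_inner_comm,
        Real.norm_eq_abs, abs_of_nonneg hR,  he1, mul_one]
    have : R < ‖w - z‖ := by nlinarith [norm_nonneg (w - z)]
    rw [dist_eq_norm, ← norm_sub_rev] at hzw
    linarith
  -- measurability
  have hcont : Continuous fun w : EuclideanSpace ℝ (Fin 2) => ⟪e, w - c⟫ :=
    (continuous_const.inner (continuous_id.sub continuous_const))
  have hHpm : MeasurableSet Hp :=
    measurableSet_ball.inter (measurableSet_lt measurable_const hcont.measurable)
  have hHmm : MeasurableSet Hm :=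
    measurableSet_ball.inter (measurableSet_lt hcont.measurable measurable_const)
  -- volume of Hm equals volume of Hp via point reflection
  have hmp : MeasurePreserving (fun w : EuclideanSpace ℝ (Fin 2) => (2:ℝ) • c - w) volume volume := by
    have h1 := Measure.measurePreserving_neg (volume : Measure (EuclideanSpace ℝ (Fin 2)))
    have h2 := measurePreserving_add_left (volume : Measure (EuclideanSpace ℝ (Fin 2))) ((2:ℝ) • c)
    have := h2.comp h1
    simpa [Function.comp_def, sub_eq_add_neg] using this
  have hpre : (fun w : EuclideanSpace ℝ (Fin 2) => (2:ℝ) • c - w) ⁻¹' Hp = Hm := by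
    ext w
    simp only [hHp, hHm, Set.mem_preimage, Set.mem_inter_iff, mem_ball, Set.mem_setOf_eq]
    constructor
    · rintro ⟨h1, h2⟩
      refine ⟨?_, ?_⟩
      · rwa [dist_eq_norm, show (2:ℝ) • c - w - c = -(w - c) by module, norm_neg,
          ← dist_eq_norm] at h1
      · rw [show (2:ℝ) • c - w - c = -(w - c) by module, inner_neg_right] at h2
        linarith
    · rintro ⟨h1, h2⟩
      refine ⟨?_, ?_⟩
      · rwa [dist_eq_norm, show (2:ℝ) • c - w - c = -(w - c) by module, norm_neg,
          ← dist_eq_norm]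
      · rw [show (2:ℝ) • c - w - c = -(w - c) by module, inner_neg_right]
        linarith
  have hvolHm : volume Hm = volume Hp := by
    rw [← hpre]; exact hmp.measure_preimage hHpm.nullMeasurableSet
  -- hyperplane has measure zero
  have hS0vol : volume S0 = 0 := by
    have hker : S0 = (fun w : EuclideanSpace ℝ (Fin 2) => w + (-c)) ⁻¹' (LinearMap.ker (innerSL ℝ e : EuclideanSpace ℝ (Fin 2) →ₗ[ℝ] ℝ) : Set (EuclideanSpace ℝ (Fin 2))) := by
      ext w
      simp [hS0, LinearMap.mem_ker, sub_eq_add_neg]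
    rw [hker, measure_preimage_add_right]
    refine Measure.addHaar_submodule _ _ ?_
    intro htop
    have : e ∈ LinearMap.ker (innerSL ℝ e : EuclideanSpace ℝ (Fin 2) →ₗ[ℝ] ℝ) := htop ▸ Submodule.mem_top
    simp only [LinearMap.mem_ker, ContinuousLinearMap.coe_coe, innerSL_apply_apply, real_inner_self_eq_norm_sq, he1] at this
    norm_num at this
  -- ball ≤ Hp + Hm + S0
  have hcover : ball c s ⊆ Hp ∪ Hm ∪ S0 := by
    intro w hw
    rcases lt_trichotomy (⟪e, w - c⟫) 0 with h | h | h
    · exact Or.inl (Or.inr ⟨hw, h⟩)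
    · exact Or.inr h
    · exact Or.inl (Or.inl ⟨hw, h⟩)
  have hballvol : volume (ball c s) = ENNReal.ofReal (Real.pi * s^2) := by
    rw [EuclideanSpace.volume_ball]
    simp only [Fintype.card_fin]
    norm_num [Real.Gamma_two, Real.sq_sqrt Real.pi_pos.le,
      ← ENNReal.ofReal_pow hs.le, ← ENNReal.ofReal_mul (by positivity : (0:ℝ) ≤ s^2)]
    ring_nf
  have hball_le : ENNReal.ofReal (Real.pi * s^2) ≤ 2 * volume Hp := by
    calc ENNReal.ofReal (Real.pi * s^2) = volume (ball c s) := hballvol.symm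
    _ ≤ volume (Hp ∪ Hm ∪ S0) := measure_mono hcover
    _ ≤ volume (Hp ∪ Hm) + volume S0 := measure_union_le _ _
    _ = volume (Hp ∪ Hm) := by rw [hS0vol, add_zero]
    _ ≤ volume Hp + volume Hm := measure_union_le _ _
    _ = 2 * volume Hp := by rw [hvolHm, two_mul]
  -- C ∪ Hp ⊆ C ∪ D, disjoint
  have hunion : volume C + volume Hp ≤ volume (C ∪ D) := by
    rw [← measure_union hHpC hHpm]
    exact measure_mono (Set.union_subset_union_right C hHpD)
  -- finiteness
  have hfinCD : volume (C ∪ D) ≠ ⊤ :=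
    ((hC.union (isCompact_closedBall v r)).measure_lt_top).ne
  have hfinC : volume C ≠ ⊤ := hC.measure_lt_top.ne
  have hfinHp : volume Hp ≠ ⊤ := by
    refine (lt_of_le_of_lt (measure_mono (Set.inter_subset_left)) ?_).ne
    rw [hballvol]; exact ENNReal.ofReal_lt_top
  -- translate to reals
  set A := (volume Hp).toReal with hA
  have hA_le : Real.pi * s^2 ≤ 2 * A := by
    have h2 := ENNReal.toReal_mono (ENNReal.mul_ne_top (by simp) hfinHp) hball_le
    rwa [ENNReal.toReal_ofReal (by positivity), ENNReal.toReal_mul, ENNReal.toReal_ofNat] at h2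
  have hΔ : A ≤ (volume (C ∪ D)).toReal - (volume C).toReal := by
    have h2 := ENNReal.toReal_mono hfinCD hunion
    rw [ENNReal.toReal_add hfinC hfinHp] at h2
    linarith
  have hfinal : s^2 ≤ 2 * ((volume (C ∪ D)).toReal - (volume C).toReal) / Real.pi := by
    rw [le_div_iff₀ hπ]
    nlinarith
  calc dist z z' - Metric.diam C ≤ s := hts
  _ = Real.sqrt (s^2) := (Real.sqrt_sq hs.le).symm
  _ ≤ _ := Real.sqrt_le_sqrt hfinal
end

section
/- Let (Fₙ)ₙ≥0 be a filtration and S ≥ 1 a stopping time for (Fₙ). For any 0 < p₀ < 1 and integers m ≥ 1, n ≥ 1, P(S > n) ≤ (1 − p₀)^m + P(L(n,p₀) < m and S > n), where L(n,p₀) = #{ i : 1 ≤ i ≤ n, P(S = i | F_{i−1}) ≥ p₀ }. -/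
open MeasureTheory
open scoped Classical

set_option linter.unusedSectionVars false

section Aux
variable {Ω : Type*} {m0 : MeasurableSpace Ω} (μ : Measure Ω) [IsProbabilityMeasure μ]
    (ℱ : Filtration ℕ m0) (S : Ω → ℕ) (p₀ : ℝ)

noncomputable def qq (i : ℕ) : Ω → ℝ :=
  μ[Set.indicator {ω' | S ω' = i} (fun _ => (1 : ℝ)) | ℱ (i - 1)]

noncomputable def LL (k : ℕ) (ω : Ω) : ℕ :=
  ((Finset.Icc 1 k).filter (fun i => p₀ ≤ qq μ ℱ S i ω)).card

lemma LL_succ (k : ℕ) (ω : Ω) : LL μ ℱ S p₀ (k+1) ω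
    = LL μ ℱ S p₀ k ω + (if p₀ ≤ qq μ ℱ S (k+1) ω then 1 else 0) := by
  unfold LL
  have h : Finset.Icc 1 (k+1) = insert (k+1) (Finset.Icc 1 k) := by
    ext j; simp only [Finset.mem_Icc, Finset.mem_insert]; omega
  rw [h, Finset.filter_insert]
  split
  · rw [Finset.card_insert_of_notMem (by simp)]
  · simp

lemma LL_le (k : ℕ) (ω : Ω) : LL μ ℱ S p₀ k ω ≤ k := by
  have := Finset.card_filter_le (Finset.Icc 1 k) (fun i => p₀ ≤ qq μ ℱ S i ω)
  simpa [LL, Nat.card_Icc] using this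

lemma LL_meas' (j k : ℕ) (hjk : j ≤ k + 1) : Measurable[ℱ k] (LL μ ℱ S p₀ j) := by
  induction j with
  | zero =>
    have h0 : LL μ ℱ S p₀ 0 = fun _ => 0 := by funext ω; simp [LL]
    rw [h0]; exact measurable_const
  | succ j ih =>
    have hq : Measurable[ℱ k] (qq μ ℱ S (j+1)) := by
      have h1 : StronglyMeasurable[ℱ ((j+1)-1)] (qq μ ℱ S (j+1)) := stronglyMeasurable_condExp
      exact (h1.mono (ℱ.mono (by omega))).measurable
    have hs : MeasurableSet[ℱ k] {ω | p₀ ≤ qq μ ℱ S (j+1) ω} :=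
      measurableSet_le measurable_const hq
    have : (LL μ ℱ S p₀ (j+1)) = fun ω =>
        LL μ ℱ S p₀ j ω + (if p₀ ≤ qq μ ℱ S (j+1) ω then 1 else 0) := by
      funext ω; exact LL_succ μ ℱ S p₀ j ω
    rw [this]
    exact (ih (by omega)).add (Measurable.ite hs measurable_const measurable_const)

lemma LL_meas (k : ℕ) : Measurable (LL μ ℱ S p₀ k) :=
  (LL_meas' μ ℱ S p₀ k k (by omega)).mono (ℱ.le k) le_rfl

/-- weight process -/
noncomputable def WW (k : ℕ) (ω : Ω) : ℝ := (1 - p₀)⁻¹ ^ LL μ ℱ S p₀ k ω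

/-- indicator of survival -/
noncomputable def gg (k : ℕ) : Ω → ℝ := Set.indicator {ω' | k < S ω'} (fun _ => (1 : ℝ))

lemma WW_meas' (j k : ℕ) (hjk : j ≤ k + 1) : Measurable[ℱ k] (WW μ ℱ S p₀ j) :=
  (measurable_from_top (f := fun i : ℕ => (1 - p₀)⁻¹ ^ i)).comp (LL_meas' μ ℱ S p₀ j k hjk)

variable {p₀} (hp₀ : 0 < p₀) (hp₁ : p₀ < 1)
include hp₀ hp₁

lemma one_le_c : (1 : ℝ) ≤ (1 - p₀)⁻¹ := by
  rw [le_inv_comm₀ one_pos (by linarith)]; linarith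

lemma WW_pos (k : ℕ) (ω : Ω) : 0 < WW μ ℱ S p₀ k ω :=
  pow_pos (inv_pos.mpr (by linarith)) _

lemma WW_le (k : ℕ) (ω : Ω) : WW μ ℱ S p₀ k ω ≤ (1 - p₀)⁻¹ ^ k :=
  pow_le_pow_right₀ (one_le_c hp₀ hp₁) (LL_le μ ℱ S p₀ k ω)

end Aux

lemma gt_aux {Ω : Type*} {m0 : MeasurableSpace Ω} (ℱ : Filtration ℕ m0) (S : Ω → ℕ)
    (hS : IsStoppingTime ℱ (fun ω => (S ω : WithTop ℕ))) (k : ℕ) :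
    MeasurableSet[ℱ k] {ω | k < S ω} := by
  simpa using hS.measurableSet_gt k

lemma eq_aux {Ω : Type*} {m0 : MeasurableSpace Ω} (ℱ : Filtration ℕ m0) (S : Ω → ℕ)
    (hS : IsStoppingTime ℱ (fun ω => (S ω : WithTop ℕ))) (k : ℕ) :
    MeasurableSet[ℱ k] {ω | S ω = k} := by
  simpa using hS.measurableSet_eq k

section Main
variable {Ω : Type*} {m0 : MeasurableSpace Ω} (μ : Measure Ω) [IsProbabilityMeasure μ]
    (ℱ : Filtration ℕ m0) (S : Ω → ℕ) {p₀ : ℝ}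
    (hS : IsStoppingTime ℱ (fun ω => (S ω : WithTop ℕ))) (hp₀ : 0 < p₀) (hp₁ : p₀ < 1)
include hS hp₀ hp₁

lemma bdd_int {f : Ω → ℝ} (hf : Measurable f) (C : ℝ) (h : ∀ ω, |f ω| ≤ C) :
    Integrable f μ :=
  (integrable_const C).mono' hf.aestronglyMeasurable
    (Filter.Eventually.of_forall (fun ω => by simpa [Real.norm_eq_abs] using h ω))

lemma gg_int (k : ℕ) : Integrable (gg S k) μ :=
  (integrable_const 1).indicator ((ℱ.le k) _ (gt_aux ℱ S hS k))

lemma gWW_int (j k : ℕ) (hjk : j ≤ k + 1) :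
    Integrable (fun ω => gg S j ω * WW μ ℱ S p₀ j ω) μ := by
  refine bdd_int μ ℱ S hS hp₀ hp₁ ?_ ((1 - p₀)⁻¹ ^ j) ?_
  · exact (measurable_const.indicator ((ℱ.le j) _ (gt_aux ℱ S hS j))).mul
      ((WW_meas' μ ℱ S p₀ j k hjk).mono (ℱ.le k) le_rfl)
  · intro ω
    have h1 : 0 ≤ gg S j ω := Set.indicator_nonneg (fun _ _ => zero_le_one) ω
    have h2 : gg S j ω ≤ 1 := by
      by_cases h : j < S ω <;> simp [gg, Set.indicator_apply, h]
    rw [abs_of_nonneg (mul_nonneg h1 (WW_pos μ ℱ S hp₀ hp₁ j ω).le)]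
    calc gg S j ω * WW μ ℱ S p₀ j ω ≤ 1 * ((1-p₀)⁻¹ ^ j) :=
          mul_le_mul h2 (WW_le μ ℱ S hp₀ hp₁ j ω) (WW_pos μ ℱ S hp₀ hp₁ j ω).le zero_le_one
      _ = (1-p₀)⁻¹ ^ j := one_mul _

lemma GG_le (k : ℕ) :
    ∫ ω, gg S k ω * WW μ ℱ S p₀ k ω ∂μ ≤ 1 := by
  induction k with
  | zero =>
    have h0 : ∀ ω, WW μ ℱ S p₀ 0 ω = 1 := by intro ω; simp [WW, LL]
    simp only [h0, mul_one]
    have h1 : ∫ ω, gg S 0 ω ∂μ = (μ {ω' | 0 < S ω'}).toReal :=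
      integral_indicator_one ((ℱ.le 0) _ (gt_aux ℱ S hS 0))
    rw [h1]
    exact (ENNReal.toReal_le_toReal (measure_ne_top μ _) ENNReal.one_ne_top).mpr prob_le_one |>.trans_eq ENNReal.toReal_one
  | succ k ih =>
    set q : Ω → ℝ := qq μ ℱ S (k+1) with hqdef
    have hq_sm : StronglyMeasurable[ℱ k] q := stronglyMeasurable_condExp
    have hq_nonneg : 0 ≤ᵐ[μ] q :=
      condExp_nonneg (Filter.Eventually.of_forall
        (fun ω => Set.indicator_nonneg (fun _ _ => zero_le_one) ω))
    have hW_sm : StronglyMeasurable[ℱ k] (WW μ ℱ S p₀ (k+1)) :=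
      (WW_meas' μ ℱ S p₀ (k+1) k le_rfl).stronglyMeasurable
    have hW_meas : Measurable (WW μ ℱ S p₀ (k+1)) :=
      (hW_sm.mono (ℱ.le k)).measurable
    have hind_int : Integrable (Set.indicator {ω' | S ω' = (k+1)} (fun _ => (1:ℝ))) μ :=
      (integrable_const 1).indicator ((ℱ.le (k+1)) _ (eq_aux ℱ S hS (k+1)))
    have hg_int : Integrable (gg S (k+1)) μ := gg_int μ ℱ S hS hp₀ hp₁ (k+1)
    -- g (k+1) = g k - indicator {S = k+1}
    have hg_eq : gg S (k+1) = gg S k - Set.indicator {ω' | S ω' = (k+1)} (fun _ => (1:ℝ)) := by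
      funext ω
      simp only [gg, Pi.sub_apply, Set.indicator_apply, Set.mem_setOf_eq]
      by_cases h1 : k + 1 < S ω
      · rw [if_pos h1, if_pos (by omega), if_neg (by omega)]; ring
      · by_cases h2 : S ω = k + 1
        · rw [if_neg h1, if_pos (by omega), if_pos h2]; ring
        · rw [if_neg h1, if_neg (by omega), if_neg h2]; ring
    -- conditional expectation of g (k+1)
    have hcx : μ[gg S (k+1) | ℱ k] =ᵐ[μ] gg S k - q := by
      rw [hg_eq]
      refine (condExp_sub (gg_int μ ℱ S hS hp₀ hp₁ k) hind_int (ℱ k)).trans ?_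
      have h1 : μ[gg S k | ℱ k] = gg S k :=
        condExp_of_stronglyMeasurable (ℱ.le k)
          (stronglyMeasurable_const.indicator (gt_aux ℱ S hS k))
          (gg_int μ ℱ S hS hp₀ hp₁ k)
      rw [h1]
      have h2 : q = μ[Set.indicator {ω' | S ω' = (k+1)} (fun _ => (1:ℝ)) | ℱ k] := rfl
      rw [h2]
    -- integrability of products
    have hWbd : ∃ C, ∀ ω, ‖WW μ ℱ S p₀ (k+1) ω‖ ≤ C :=
      ⟨(1-p₀)⁻¹ ^ (k+1), fun ω => by
        rw [Real.norm_eq_abs, abs_of_nonneg (WW_pos μ ℱ S hp₀ hp₁ _ ω).le]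
        exact WW_le μ ℱ S hp₀ hp₁ (k+1) ω⟩
    have hmul_int : Integrable (WW μ ℱ S p₀ (k+1) * gg S (k+1)) μ :=
      Integrable.bdd_mul hg_int hW_meas.aestronglyMeasurable (Filter.Eventually.of_forall hWbd.choose_spec)
    have step1 : ∫ ω, gg S (k+1) ω * WW μ ℱ S p₀ (k+1) ω ∂μ
        = ∫ ω, (WW μ ℱ S p₀ (k+1) * gg S (k+1)) ω ∂μ := by
      congr 1; funext ω; exact mul_comm _ _
    have step2 : ∫ ω, (WW μ ℱ S p₀ (k+1) * gg S (k+1)) ω ∂μ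
        = ∫ ω, (μ[WW μ ℱ S p₀ (k+1) * gg S (k+1) | ℱ k]) ω ∂μ :=
      (integral_condExp (ℱ.le k)).symm
    have step3 : ∫ ω, (μ[WW μ ℱ S p₀ (k+1) * gg S (k+1) | ℱ k]) ω ∂μ
        = ∫ ω, WW μ ℱ S p₀ (k+1) ω * (μ[gg S (k+1) | ℱ k]) ω ∂μ :=
      integral_congr_ae (condExp_mul_of_stronglyMeasurable_left hW_sm hmul_int hg_int)
    have step4 : ∫ ω, WW μ ℱ S p₀ (k+1) ω * (μ[gg S (k+1) | ℱ k]) ω ∂μ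
        = ∫ ω, WW μ ℱ S p₀ (k+1) ω * (gg S k ω - q ω) ∂μ := by
      refine integral_congr_ae ?_
      filter_upwards [hcx] with ω hω
      rw [hω]; rfl
    have hq_int : Integrable q μ := integrable_condExp
    have hrhs_int : Integrable (fun ω => WW μ ℱ S p₀ (k+1) ω * (gg S k ω - q ω)) μ :=
      Integrable.bdd_mul ((gg_int μ ℱ S hS hp₀ hp₁ k).sub hq_int)
        hW_meas.aestronglyMeasurable (Filter.Eventually.of_forall hWbd.choose_spec)
    have step5 : ∫ ω, WW μ ℱ S p₀ (k+1) ω * (gg S k ω - q ω) ∂μ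
        ≤ ∫ ω, gg S k ω * WW μ ℱ S p₀ k ω ∂μ := by
      refine integral_mono_ae hrhs_int (gWW_int μ ℱ S hS hp₀ hp₁ k k (by omega)) ?_
      filter_upwards [hq_nonneg] with ω hq0
      have hq0' : (0:ℝ) ≤ q ω := hq0
      have hWpos : 0 < WW μ ℱ S p₀ k ω := WW_pos μ ℱ S hp₀ hp₁ k ω
      have hcpos : (0:ℝ) < (1-p₀)⁻¹ := inv_pos.mpr (by linarith)
      have hrec : WW μ ℱ S p₀ (k+1) ω
          = WW μ ℱ S p₀ k ω * (if p₀ ≤ q ω then (1-p₀)⁻¹ else 1) := by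
        unfold WW
        rw [LL_succ]
        by_cases hc : p₀ ≤ q ω
        · rw [if_pos hc, if_pos hc, pow_succ]
        · rw [if_neg hc, if_neg hc, add_zero, mul_one]
      by_cases hSk : k < S ω
      · have hgk : gg S k ω = 1 := by simp [gg, Set.indicator_apply, hSk]
        rw [hgk, hrec]
        by_cases hc : p₀ ≤ q ω
        · rw [if_pos hc]
          have h1 : (1-p₀)⁻¹ * (1 - q ω) ≤ 1 := by
            have h2 : (1-p₀)⁻¹ * (1 - q ω) ≤ (1-p₀)⁻¹ * (1 - p₀) :=
              mul_le_mul_of_nonneg_left (by linarith) hcpos.le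
            rwa [inv_mul_cancel₀ (by linarith : (1:ℝ)-p₀ ≠ 0)] at h2
          calc WW μ ℱ S p₀ k ω * (1-p₀)⁻¹ * (1 - q ω)
              = WW μ ℱ S p₀ k ω * ((1-p₀)⁻¹ * (1 - q ω)) := by ring
            _ ≤ WW μ ℱ S p₀ k ω * 1 := mul_le_mul_of_nonneg_left h1 hWpos.le
            _ = 1 * WW μ ℱ S p₀ k ω := by ring
        · rw [if_neg hc, mul_one]
          nlinarith [mul_nonneg hWpos.le hq0']
      · have hgk : gg S k ω = 0 := by simp [gg, Set.indicator_apply, hSk]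
        rw [hgk, hrec, zero_mul]
        by_cases hc : p₀ ≤ q ω
        · rw [if_pos hc]
          nlinarith [mul_nonneg (mul_nonneg hWpos.le hcpos.le) hq0']
        · rw [if_neg hc, mul_one]
          nlinarith [mul_nonneg hWpos.le hq0']
    calc ∫ ω, gg S (k+1) ω * WW μ ℱ S p₀ (k+1) ω ∂μ
        ≤ ∫ ω, gg S k ω * WW μ ℱ S p₀ k ω ∂μ := by
          rw [step1, step2, step3, step4]; exact step5
      _ ≤ 1 := ih

end Main

section Markov
variable {Ω : Type*} {m0 : MeasurableSpace Ω} (μ : Measure Ω) [IsProbabilityMeasure μ]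
    (ℱ : Filtration ℕ m0) (S : Ω → ℕ) {p₀ : ℝ}
    (hS : IsStoppingTime ℱ (fun ω => (S ω : WithTop ℕ))) (hp₀ : 0 < p₀) (hp₁ : p₀ < 1)
include hS hp₀ hp₁

lemma markov_bound (n m : ℕ) :
    (μ {ω | m ≤ LL μ ℱ S p₀ n ω ∧ n < S ω}).toReal ≤ (1 - p₀) ^ m := by
  set A := {ω | m ≤ LL μ ℱ S p₀ n ω ∧ n < S ω} with hAdef
  have hA : MeasurableSet A := by
    refine MeasurableSet.inter ?_ ((ℱ.le n) _ (gt_aux ℱ S hS n))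
    exact measurableSet_le measurable_const (LL_meas μ ℱ S p₀ n)
  have hpow_nonneg : (0:ℝ) ≤ (1 - p₀) ^ m := pow_nonneg (by linarith) m
  have hint : Integrable (fun ω => (1 - p₀) ^ m * (gg S n ω * WW μ ℱ S p₀ n ω)) μ :=
    (gWW_int μ ℱ S hS hp₀ hp₁ n n (by omega)).const_mul _
  have hptw : ∀ ω, Set.indicator A (fun _ => (1:ℝ)) ω
      ≤ (1 - p₀) ^ m * (gg S n ω * WW μ ℱ S p₀ n ω) := by
    intro ω
    by_cases hω : ω ∈ A
    · rw [Set.indicator_of_mem hω]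
      obtain ⟨hL, hSn⟩ := hω
      have hg : gg S n ω = 1 := by simp [gg, Set.indicator_apply, hSn]
      have hW : (1 - p₀)⁻¹ ^ m ≤ WW μ ℱ S p₀ n ω :=
        pow_le_pow_right₀ (one_le_c hp₀ hp₁) hL
      have hone : (1 - p₀) ^ m * (1 - p₀)⁻¹ ^ m = 1 := by
        rw [← mul_pow, mul_inv_cancel₀ (by linarith : (1:ℝ) - p₀ ≠ 0), one_pow]
      calc (1:ℝ) = (1 - p₀) ^ m * (1 - p₀)⁻¹ ^ m := hone.symm
        _ ≤ (1 - p₀) ^ m * WW μ ℱ S p₀ n ω := mul_le_mul_of_nonneg_left hW hpow_nonneg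
        _ = (1 - p₀) ^ m * (gg S n ω * WW μ ℱ S p₀ n ω) := by rw [hg, one_mul]
    · rw [Set.indicator_of_notMem hω]
      have h1 : 0 ≤ gg S n ω := Set.indicator_nonneg (fun _ _ => zero_le_one) ω
      exact mul_nonneg hpow_nonneg (mul_nonneg h1 (WW_pos μ ℱ S hp₀ hp₁ n ω).le)
  have h2 : (μ A).toReal = ∫ ω, Set.indicator A (fun _ => (1:ℝ)) ω ∂μ :=
    (integral_indicator_one hA).symm
  rw [h2]
  calc ∫ ω, Set.indicator A (fun _ => (1:ℝ)) ω ∂μ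
      ≤ ∫ ω, (1 - p₀) ^ m * (gg S n ω * WW μ ℱ S p₀ n ω) ∂μ :=
        integral_mono ((integrable_const 1).indicator hA) hint hptw
    _ = (1 - p₀) ^ m * ∫ ω, gg S n ω * WW μ ℱ S p₀ n ω ∂μ := integral_const_mul _ _
    _ ≤ (1 - p₀) ^ m * 1 :=
        mul_le_mul_of_nonneg_left (GG_le μ ℱ S hS hp₀ hp₁ n) hpow_nonneg
    _ = (1 - p₀) ^ m := mul_one _

end Markov

/-- Martingale-type bound: for a stopping time `S ≥ 1`,
`P(S > n) ≤ (1 − p₀)^m + P(L(n,p₀) < m, S > n)` where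
`L(n,p₀)(ω) = #{1 ≤ i ≤ n : P(S = i | F_{i−1})(ω) ≥ p₀}`. -/
theorem stmt_5 {Ω : Type*} {m0 : MeasurableSpace Ω} (μ : Measure Ω) [IsProbabilityMeasure μ]
    (ℱ : Filtration ℕ m0) (S : Ω → ℕ) (hS : IsStoppingTime ℱ (fun ω => (S ω : WithTop ℕ)))
    (hS1 : ∀ᵐ ω ∂μ, 1 ≤ S ω) (p₀ : ℝ) (hp₀ : 0 < p₀) (hp₁ : p₀ < 1) (m n : ℕ)
    (hm : 1 ≤ m) (hn : 1 ≤ n) :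
    μ {ω | n < S ω} ≤ ENNReal.ofReal ((1 - p₀) ^ m) +
      μ {ω | ((Finset.Icc 1 n).filter (fun i =>
          p₀ ≤ (μ[Set.indicator {ω' | S ω' = i} (fun _ => (1 : ℝ)) | ℱ (i - 1)]) ω)).card < m
        ∧ n < S ω} := by
  show μ {ω | n < S ω} ≤ ENNReal.ofReal ((1 - p₀) ^ m) +
      μ {ω | LL μ ℱ S p₀ n ω < m ∧ n < S ω}
  set A := {ω | m ≤ LL μ ℱ S p₀ n ω ∧ n < S ω}
  set A' := {ω | LL μ ℱ S p₀ n ω < m ∧ n < S ω}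
  have hsub : {ω | n < S ω} ⊆ A' ∪ A := by
    intro ω hω
    by_cases h : LL μ ℱ S p₀ n ω < m
    · exact Or.inl ⟨h, hω⟩
    · exact Or.inr ⟨by omega, hω⟩
  have hMA : μ A ≤ ENNReal.ofReal ((1 - p₀) ^ m) := by
    rw [ENNReal.le_ofReal_iff_toReal_le (measure_ne_top μ A) (pow_nonneg (by linarith) m)]
    exact markov_bound μ ℱ S hS hp₀ hp₁ n m
  calc μ {ω | n < S ω} ≤ μ (A' ∪ A) := measure_mono hsub
    _ ≤ μ A' + μ A := measure_union_le A' A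
    _ ≤ μ A' + ENNReal.ofReal ((1 - p₀) ^ m) := by gcongr
    _ = ENNReal.ofReal ((1 - p₀) ^ m) + μ A' := add_comm _ _
end

section
/- Under the hypotheses of the planted-point lemma: let Ξ be a homogeneous Poisson point process on ℝ² of rate λ, and z₁, z₂ ∈ ℝ² with d = ‖z₂ − z₁‖. Then the probability that the nearest point of Ξ to z₁ equals the nearest point of Ξ to z₂ and that this common point is at distance > r from both z₁ and z₂ is at least exp(−λπ(r + d)²) − P(D₂ − D₁ ≤ 2d), where D₁ ≤ D₂ are the two smallest distances from z₂ to points of Ξ. -/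
open MeasureTheory

/-- A Poisson point process with intensity measure `ν`. -/
def IsPoissonPP {Ω E : Type*} [MeasurableSpace Ω] [MeasurableSpace E]
    (μ : Measure Ω) (Ξ : Ω → Set E) (ν : Measure E) : Prop :=
  (∀ᵐ ω ∂μ, ∀ A : Set E, MeasurableSet A → ν A < ⊤ → (Ξ ω ∩ A).Finite) ∧
  ∀ (n : ℕ) (A : Fin n → Set E), (∀ i, MeasurableSet (A i)) → (∀ i, ν (A i) < ⊤) →
    Pairwise (Function.onFun Disjoint A) → ∀ k : Fin n → ℕ,
      μ {ω | ∀ i, (Ξ ω ∩ A i).ncard = k i} =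
        ∏ i, ENNReal.ofReal (Real.exp (-(ν (A i)).toReal) * (ν (A i)).toReal ^ (k i) /
          (Nat.factorial (k i)))

/-- The distance from `z` to the `k`-th nearest point of the set `Ξ`. -/
noncomputable def nthDist (z : EuclideanSpace ℝ (Fin 2))
    (Ξ : Set (EuclideanSpace ℝ (Fin 2))) (k : ℕ) : ℝ :=
  sInf {s : ℝ | 0 ≤ s ∧ k ≤ (Ξ ∩ Metric.closedBall z s).ncard}

lemma ptwise_stmt14 (z₁ z₂ : EuclideanSpace ℝ (Fin 2)) (r : ℝ)
    (S : Set (EuclideanSpace ℝ (Fin 2)))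
    (hloc : ∀ R : ℝ, (S ∩ Metric.closedBall z₂ R).Finite)
    (hA : S ∩ Metric.closedBall z₁ (r + dist z₂ z₁) = ∅)
    (hB : ¬ (nthDist z₂ S 2 - nthDist z₂ S 1 ≤ 2 * dist z₂ z₁)) :
    ∃ p ∈ S,
        (∀ q ∈ S, q ≠ p → dist z₁ p < dist z₁ q) ∧
        (∀ q ∈ S, q ≠ p → dist z₂ p < dist z₂ q) ∧
        r < dist z₁ p ∧ r < dist z₂ p := by
  push_neg at hB
  set d := dist z₂ z₁ with hd
  have hd0 : 0 ≤ d := dist_nonneg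
  -- S nonempty
  have hne : S.Nonempty := by
    by_contra h
    rw [Set.not_nonempty_iff_eq_empty] at h
    subst h
    have : ∀ k : ℕ, 1 ≤ k → nthDist z₂ ∅ k = 0 := by
      intro k hk
      have : {s : ℝ | 0 ≤ s ∧ k ≤ ((∅ : Set (EuclideanSpace ℝ (Fin 2))) ∩ Metric.closedBall z₂ s).ncard} = ∅ := by
        ext s
        simp only [Set.empty_inter, Set.ncard_empty, Set.mem_setOf_eq, Set.mem_empty_iff_false, iff_false]
        rintro ⟨-, h2⟩; omega
      rw [nthDist, this, Real.sInf_empty]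
    rw [this 2 (by norm_num), this 1 le_rfl] at hB
    linarith
  obtain ⟨q₀, hq₀⟩ := hne
  have hF : (S ∩ Metric.closedBall z₂ (dist z₂ q₀)).Finite := hloc _
  have hFne : (S ∩ Metric.closedBall z₂ (dist z₂ q₀)).Nonempty :=
    ⟨q₀, hq₀, Metric.mem_closedBall.2 (dist_comm z₂ q₀ ▸ le_rfl)⟩
  obtain ⟨p, hpF, hpmin⟩ := Set.exists_min_image _ (fun q => dist z₂ q) hF hFne
  have hpS : p ∈ S := hpF.1
  have hmin : ∀ q ∈ S, dist z₂ p ≤ dist z₂ q := by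
    intro q hq
    by_cases h : q ∈ Metric.closedBall z₂ (dist z₂ q₀)
    · exact hpmin q ⟨hq, h⟩
    · have h1 : dist z₂ q₀ < dist z₂ q := by
        simpa [Metric.mem_closedBall, dist_comm] using h
      have h2 : dist z₂ p ≤ dist z₂ q₀ := by
        have := hpF.2; simpa [Metric.mem_closedBall, dist_comm] using this
      linarith
  -- D₁ = dist z₂ p
  have hD1 : nthDist z₂ S 1 = dist z₂ p := by
    apply IsLeast.csInf_eq
    constructor
    · refine ⟨dist_nonneg, ?_⟩
      have hfin : (S ∩ Metric.closedBall z₂ (dist z₂ p)).Finite := hloc _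
      have hne' : (S ∩ Metric.closedBall z₂ (dist z₂ p)).Nonempty :=
        ⟨p, hpS, Metric.mem_closedBall.2 (dist_comm z₂ p ▸ le_rfl)⟩
      exact (Set.ncard_pos hfin).2 hne'
    · rintro s ⟨hs0, hs1⟩
      obtain ⟨q, hqS, hq⟩ := Set.nonempty_of_ncard_ne_zero (s := S ∩ Metric.closedBall z₂ s) (by omega)
      have : dist z₂ q ≤ s := by simpa [Metric.mem_closedBall, dist_comm] using hq
      exact le_trans (hmin q hqS) this
  -- D₂ ≤ dist z₂ q for q ≠ p
  have hD2le : ∀ q ∈ S, q ≠ p → nthDist z₂ S 2 ≤ dist z₂ q := by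
    intro q hq hqp
    apply csInf_le
    · exact ⟨0, fun s hs => hs.1⟩
    · refine ⟨dist_nonneg, ?_⟩
      have hfin : (S ∩ Metric.closedBall z₂ (dist z₂ q)).Finite := hloc _
      have h2 : 1 < (S ∩ Metric.closedBall z₂ (dist z₂ q)).ncard := by
        rw [Set.one_lt_ncard hfin]
        exact ⟨q, ⟨hq, Metric.mem_closedBall.2 (dist_comm z₂ q ▸ le_rfl)⟩,
          p, ⟨hpS, Metric.mem_closedBall.2 (dist_comm z₂ p ▸ hmin q hq)⟩, hqp.symm ∘ Eq.symm⟩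
      omega
  have hfar : ∀ q ∈ S, q ≠ p → dist z₂ p + 2 * d < dist z₂ q := by
    intro q hq hqp
    have := hD2le q hq hqp
    rw [hD1] at hB
    linarith
  -- p is far from z₁
  have hpz₁ : r + d < dist z₁ p := by
    by_contra h
    push_neg at h
    have : p ∈ S ∩ Metric.closedBall z₁ (r + d) := ⟨hpS, Metric.mem_closedBall.2 (by rwa [dist_comm])⟩
    rw [hA] at this
    exact this
  have hpz₂ : r < dist z₂ p := by
    have := dist_triangle z₁ z₂ p
    rw [dist_comm z₁ z₂, ← hd] at this
    linarith
  refine ⟨p, hpS, ?_, ?_, by linarith, hpz₂⟩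
  · intro q hq hqp
    have h1 := hfar q hq hqp
    have h2 := dist_triangle z₂ z₁ q
    have h3 := dist_triangle z₁ z₂ p
    rw [dist_comm z₁ z₂] at h3
    linarith
  · intro q hq hqp
    have := hfar q hq hqp
    linarith

/-- Planted-point lemma: for a rate-`l` homogeneous Poisson process `Ξ` and points
`z₁, z₂` at distance `d`, the probability that the nearest point of `Ξ` to `z₁` equals
the nearest point to `z₂` and lies at distance `> r` from both is at least
`exp(−lπ(r+d)²) − P(D₂ − D₁ ≤ 2d)`, where `D₁ ≤ D₂` are the two nearest distances
from `z₂` to the process. -/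
theorem stmt_14 {Ω : Type*} [MeasurableSpace Ω] (μ : Measure Ω) [IsProbabilityMeasure μ]
    (l : ℝ) (hl : 0 < l) (Ξ : Ω → Set (EuclideanSpace ℝ (Fin 2)))
    (hppp : IsPoissonPP μ Ξ (ENNReal.ofReal l • volume))
    (z₁ z₂ : EuclideanSpace ℝ (Fin 2)) (r : ℝ) (hr : 0 < r) :
    Real.exp (-(l * Real.pi * (r + dist z₂ z₁) ^ 2)) -
      (μ {ω | nthDist z₂ (Ξ ω) 2 - nthDist z₂ (Ξ ω) 1 ≤ 2 * dist z₂ z₁}).toReal ≤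
    (μ {ω | ∃ p ∈ Ξ ω,
        (∀ q ∈ Ξ ω, q ≠ p → dist z₁ p < dist z₁ q) ∧
        (∀ q ∈ Ξ ω, q ≠ p → dist z₂ p < dist z₂ q) ∧
        r < dist z₁ p ∧ r < dist z₂ p}).toReal := by
  set d := dist z₂ z₁ with hd
  have hd0 : 0 ≤ d := dist_nonneg
  set ν : Measure (EuclideanSpace ℝ (Fin 2)) := ENNReal.ofReal l • volume with hν
  have hνball : ∀ (z : EuclideanSpace ℝ (Fin 2)) (R : ℝ), ν (Metric.closedBall z R) < ⊤ := by
    intro z R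
    rw [hν, Measure.smul_apply, smul_eq_mul]
    exact ENNReal.mul_lt_top ENNReal.ofReal_lt_top measure_closedBall_lt_top
  have hνval : (ν (Metric.closedBall z₁ (r + d))).toReal = l * Real.pi * (r + d) ^ 2 := by
    rw [hν, Measure.smul_apply, smul_eq_mul, EuclideanSpace.volume_closedBall]
    simp only [Fintype.card_fin]
    have h1 : ((2 : ℕ) : ℝ) / 2 + 1 = 2 := by norm_num
    rw [h1, Real.Gamma_two, Real.sq_sqrt Real.pi_nonneg, div_one,
      ← ENNReal.ofReal_pow (by linarith),
      ← ENNReal.ofReal_mul (by positivity), ← ENNReal.ofReal_mul hl.le,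
      ENNReal.toReal_ofReal (by positivity)]
    ring
  -- the Poisson probability of no point in the ball around z₁
  have key := hppp.2 1 (fun _ => Metric.closedBall z₁ (r + d))
    (fun _ => measurableSet_closedBall) (fun _ => hνball _ _)
    (by intro i j hij; exact absurd (Subsingleton.elim i j) hij) (fun _ => 0)
  simp only [Fin.forall_fin_one, Fin.prod_univ_one, pow_zero, Nat.factorial_zero,
    Nat.cast_one, mul_one, div_one] at key
  rw [hνval] at key
  set E₁ : Set Ω := {ω | (Ξ ω ∩ Metric.closedBall z₁ (r + d)).ncard = 0} with hE₁
  set Bset : Set Ω := {ω | nthDist z₂ (Ξ ω) 2 - nthDist z₂ (Ξ ω) 1 ≤ 2 * d} with hBset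
  set T : Set Ω := {ω | ∃ p ∈ Ξ ω,
        (∀ q ∈ Ξ ω, q ≠ p → dist z₁ p < dist z₁ q) ∧
        (∀ q ∈ Ξ ω, q ≠ p → dist z₂ p < dist z₂ q) ∧
        r < dist z₁ p ∧ r < dist z₂ p} with hT
  set N : Set Ω := {ω | ¬ ∀ A : Set (EuclideanSpace ℝ (Fin 2)),
      MeasurableSet A → ν A < ⊤ → (Ξ ω ∩ A).Finite} with hN
  have hNnull : μ N = 0 := hppp.1
  have hsub : E₁ ⊆ T ∪ Bset ∪ N := by
    intro ω hω
    by_cases hωN : ω ∈ N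
    · exact Or.inr hωN
    by_cases hωB : ω ∈ Bset
    · exact Or.inl (Or.inr hωB)
    left; left
    simp only [hN, Set.mem_setOf_eq, not_not] at hωN
    have hloc : ∀ R : ℝ, (Ξ ω ∩ Metric.closedBall z₂ R).Finite :=
      fun R => hωN _ measurableSet_closedBall (hνball _ _)
    have hAω : Ξ ω ∩ Metric.closedBall z₁ (r + d) = ∅ := by
      have hfin : (Ξ ω ∩ Metric.closedBall z₁ (r + d)).Finite :=
        hωN _ measurableSet_closedBall (hνball _ _)
      have := hω
      simp only [hE₁, Set.mem_setOf_eq] at this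
      exact (Set.ncard_eq_zero hfin).1 this
    exact ptwise_stmt14 z₁ z₂ r (Ξ ω) hloc hAω hωB
  have hmeas : μ E₁ ≤ μ T + μ Bset := by
    calc μ E₁ ≤ μ (T ∪ Bset ∪ N) := measure_mono hsub
      _ ≤ μ (T ∪ Bset) + μ N := measure_union_le _ _
      _ = μ (T ∪ Bset) := by rw [hNnull, add_zero]
      _ ≤ μ T + μ Bset := measure_union_le _ _
  rw [key] at hmeas
  have hTfin : μ T ≠ ⊤ := (measure_lt_top μ T).ne
  have hBfin : μ Bset ≠ ⊤ := (measure_lt_top μ Bset).ne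
  have h2 := ENNReal.toReal_mono (by finiteness) hmeas
  rw [ENNReal.toReal_add hTfin hBfin, ENNReal.toReal_ofReal (Real.exp_pos _).le] at h2
  linarith
end
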